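/- If G contains a clique K with vertex set V(K) of size k and edge set E(K), then for W = {m'_v : v ∈ V(K)} ∪ {m'_e : e ∈ E(K)} (so |W| = k + k(k−1)/2) the instance I_W admits a perfect stable matching; in particular it admits a stable matching covering w*. -/

import Mathlib

/-- A Stable Roommates instance on agent type `α`: a symmetric, loopless
acceptability relation, together with, for each agent `u`, a strict linear
order `pref u` over the agents acceptable to `u`
(`pref u x y` means `u` strictly prefers `x` to `y`). -/
structure SR (α : Type*) where
  accept : α → α → Prop
  symm : ∀ {u v}, accept u v → accept v u
  loopless : ∀ u, ¬ accept u u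
  pref : α → α → α → Prop
  pref_acc : ∀ {u x y}, pref u x y → accept u x ∧ accept u y
  pref_irrefl : ∀ u x, ¬ pref u x x
  pref_trans : ∀ {u x y z}, pref u x y → pref u y z → pref u x z
  pref_total : ∀ {u x y}, accept u x → accept u y → x ≠ y → pref u x y ∨ pref u y x

namespace SR

variable {α : Type*}

/-- `M` is a matching in `I`: a set of acceptable pairs in which
every agent has at most one partner. -/
def IsMatching (I : SR α) (M : Finset (Sym2 α)) : Prop :=
  (∀ u v : α, s(u, v) ∈ M → I.accept u v) ∧
  (∀ u v w : α, s(u, v) ∈ M → s(u, w) ∈ M → v = w)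

/-- The pair `{u, v}` blocks the matching `M` in `I`. -/
def Blocks (I : SR α) (M : Finset (Sym2 α)) (u v : α) : Prop :=
  I.accept u v ∧ (∀ w, s(u, w) ∈ M → I.pref u v w) ∧ (∀ w, s(v, w) ∈ M → I.pref v u w)

/-- `M` is a stable matching in `I`. -/
def IsStable (I : SR α) (M : Finset (Sym2 α)) : Prop :=
  I.IsMatching M ∧ ∀ u v, ¬ I.Blocks M u v

/-- The instance obtained from `I` by deleting the acceptability of the pairs in `F`. -/
def delPairs (I : SR α) (F : Set (Sym2 α)) : SR α where
  accept u v := I.accept u v ∧ s(u, v) ∉ F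
  symm h := ⟨I.symm h.1, by rw [Sym2.eq_swap]; exact h.2⟩
  loopless u h := I.loopless u h.1
  pref u x y := I.pref u x y ∧ s(u, x) ∉ F ∧ s(u, y) ∉ F
  pref_acc h := ⟨⟨(I.pref_acc h.1).1, h.2.1⟩, ⟨(I.pref_acc h.1).2, h.2.2⟩⟩
  pref_irrefl u x h := I.pref_irrefl u x h.1
  pref_trans h1 h2 := ⟨I.pref_trans h1.1 h2.1, h1.2.1, h2.2.2⟩
  pref_total hx hy hne :=
    (I.pref_total hx.1 hy.1 hne).imp (fun h => ⟨h, hx.2, hy.2⟩) (fun h => ⟨h, hy.2, hx.2⟩)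

/-- The sub-instance of `I` induced by the agent set `T`. -/
def induce (I : SR α) (T : Set α) : SR α where
  accept u v := I.accept u v ∧ u ∈ T ∧ v ∈ T
  symm h := ⟨I.symm h.1, h.2.2, h.2.1⟩
  loopless u h := I.loopless u h.1
  pref u x y := I.pref u x y ∧ u ∈ T ∧ x ∈ T ∧ y ∈ T
  pref_acc h := ⟨⟨(I.pref_acc h.1).1, h.2.1, h.2.2.1⟩, ⟨(I.pref_acc h.1).2, h.2.1, h.2.2.2⟩⟩
  pref_irrefl u x h := I.pref_irrefl u x h.1
  pref_trans h1 h2 := ⟨I.pref_trans h1.1 h2.1, h1.2.1, h1.2.2.1, h2.2.2.2⟩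
  pref_total hx hy hne :=
    (I.pref_total hx.1 hy.1 hne).imp (fun h => ⟨h, hx.2.1, hx.2.2, hy.2.2⟩)
      (fun h => ⟨h, hx.2.1, hy.2.2, hx.2.2⟩)

/-- The instance obtained from `I` by deleting the agents in `W`. -/
def delAgents (I : SR α) (W : Set α) : SR α := I.induce Wᶜ

end SR

/-! ## The clique construction `I(G, k)` -/

/-- Agents of the instance `I(G, k)`: women `w_v`, `w_e`, selector women `s_i`, `w*`;
men `m'_v`, `m_e`, `m'_e`, dummy men `d_i`, and `m*`.  (Agents whose index is out of
range — `we e` or `me e` or `me' e` with `e` not an edge, `sel i` with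
`i ≥ k(k-1)/2`, `dum i` with `i ≥ |V| - k` — are inactive: they accept nobody.) -/
inductive CAg (V : Type*) where
  | wv : V → CAg V          -- woman `w_v`
  | we : Sym2 V → CAg V     -- woman `w_e`
  | sel : ℕ → CAg V         -- selector woman `s_i`
  | wstar : CAg V           -- woman `w*`
  | mv : V → CAg V          -- man `m'_v`
  | me : Sym2 V → CAg V     -- man `m_e`
  | me' : Sym2 V → CAg V    -- man `m'_e`
  | dum : ℕ → CAg V         -- dummy man `d_i`
  | mstar : CAg V           -- man `m*`
  deriving DecidableEq

open CAg

/-- The acceptability lists of `I(G, k)` (from the men's side, plus `m*`'s list);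
`q = k(k-1)/2` is the number of selector women and `d = |V| - k` the number of dummies. -/
def cliqueBaseAcc {V : Type*} (G : SimpleGraph V) (q d : ℕ) (x y : CAg V) : Prop :=
  (x = mstar ∧ ((∃ i < q, y = sel i) ∨ y = wstar)) ∨
  (∃ i < q, x = sel i ∧ ∃ e ∈ G.edgeSet, y = me e) ∨
  (∃ e ∈ G.edgeSet, x = me e ∧ (y = we e ∨ ∃ v ∈ e, y = wv v)) ∨
  (∃ e ∈ G.edgeSet, x = me' e ∧ y = we e) ∨
  (∃ v : V, x = mv v ∧ y = wv v) ∨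
  (∃ i < d, x = dum i ∧ ∃ v : V, y = wv v)

/-- `I` is a realization of the instance `I(G, k)`: its acceptability relation is as
prescribed, and its preferences respect all comparisons forced by the construction
(within each unordered set in a preference list the order is arbitrary). -/
def IsCliqueInstance {V : Type*} [Fintype V] (G : SimpleGraph V) (k : ℕ)
    (I : SR (CAg V)) : Prop :=
  (∀ x y, I.accept x y ↔
    (cliqueBaseAcc G (k * (k - 1) / 2) (Fintype.card V - k) x y ∨
     cliqueBaseAcc G (k * (k - 1) / 2) (Fintype.card V - k) y x)) ∧
  -- m*: S ≻ w*
  (∀ i < k * (k - 1) / 2, I.pref mstar (sel i) wstar) ∧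
  -- s: {m_e : e ∈ E} ≻ m*
  (∀ i < k * (k - 1) / 2, ∀ e ∈ G.edgeSet, I.pref (sel i) (me e) mstar) ∧
  -- m_e: w_e ≻ {w_v : v ∈ e} ≻ S
  (∀ e ∈ G.edgeSet, ∀ v ∈ e, I.pref (me e) (we e) (wv v)) ∧
  (∀ e ∈ G.edgeSet, ∀ v ∈ e, ∀ i < k * (k - 1) / 2, I.pref (me e) (wv v) (sel i)) ∧
  (∀ e ∈ G.edgeSet, ∀ i < k * (k - 1) / 2, I.pref (me e) (we e) (sel i)) ∧
  -- w_e: m'_e ≻ m_e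
  (∀ e ∈ G.edgeSet, I.pref (we e) (me' e) (me e)) ∧
  -- w_v: m'_v ≻ {m_e : e ∋ v} ≻ D
  (∀ v : V, ∀ e ∈ G.edgeSet, v ∈ e → I.pref (wv v) (mv v) (me e)) ∧
  (∀ v : V, ∀ e ∈ G.edgeSet, v ∈ e → ∀ i < Fintype.card V - k, I.pref (wv v) (me e) (dum i)) ∧
  (∀ v : V, ∀ i < Fintype.card V - k, I.pref (wv v) (mv v) (dum i))

/-- The original agents of `I(G, k)`: everybody except the addable men `m'_v`, `m'_e`. -/
def cliqueOrig {V : Type*} [Fintype V] (G : SimpleGraph V) (k : ℕ) : Set (CAg V) :=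
  {x | (∃ v : V, x = wv v) ∨ (∃ e ∈ G.edgeSet, x = we e) ∨
    (∃ i < k * (k - 1) / 2, x = sel i) ∨ x = wstar ∨
    (∃ e ∈ G.edgeSet, x = me e) ∨ (∃ i < Fintype.card V - k, x = dum i) ∨ x = mstar}

/-- The addable men `M'_V = {m'_v : v ∈ V}`. -/
def addableMV {V : Type*} : Set (CAg V) := {x | ∃ v : V, x = mv v}

/-- The addable men `M'_E = {m'_e : e ∈ E}`. -/
def addableME {V : Type*} (G : SimpleGraph V) : Set (CAg V) :=
  {x | ∃ e ∈ G.edgeSet, x = me' e}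

/-- A pair `{m_e, w_v}` with `v` an endpoint of the edge `e` is *problematic*. -/
def Problematic {V : Type*} (G : SimpleGraph V) (p : Sym2 (CAg V)) : Prop :=
  ∃ e ∈ G.edgeSet, ∃ v ∈ e, p = s(me e, wv v)



open Finset

section GS

variable {n : ℕ} (ra rb : Fin n → Fin n → ℕ)

noncomputable def gsProp (R : Fin n → Finset (Fin n)) (a : Fin n) : Fin n :=
  if h : (R a).Nonempty then (Finset.exists_min_image (R a) (ra a) h).choose else a

lemma gsProp_mem {R : Fin n → Finset (Fin n)} {a : Fin n} (h : (R a).Nonempty) :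
    gsProp ra R a ∈ R a := by
  rw [gsProp, dif_pos h]
  exact (Finset.exists_min_image (R a) (ra a) h).choose_spec.1

lemma gsProp_min {R : Fin n → Finset (Fin n)} {a : Fin n} (h : (R a).Nonempty) :
    ∀ b ∈ R a, ra a (gsProp ra R a) ≤ ra a b := by
  rw [gsProp, dif_pos h]
  exact (Finset.exists_min_image (R a) (ra a) h).choose_spec.2

lemma gsProp_eq (ha : ∀ a, Function.Injective (ra a)) {R : Fin n → Finset (Fin n)}
    {a : Fin n} {b : Fin n} (hb : b ∈ R a) (hmin : ∀ c ∈ R a, ra a b ≤ ra a c) :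
    gsProp ra R a = b := by
  have hne : (R a).Nonempty := ⟨b, hb⟩
  apply ha a
  exact le_antisymm (gsProp_min ra hne b hb) (hmin _ (gsProp_mem ra hne))

lemma gsProp_congr (ha : ∀ a, Function.Injective (ra a)) {R R' : Fin n → Finset (Fin n)}
    {a : Fin n} (h : R' a = R a) (hne : (R a).Nonempty) :
    gsProp ra R' a = gsProp ra R a := by
  apply gsProp_eq ra ha
  · rw [h]; exact gsProp_mem ra hne
  · rw [h]; exact gsProp_min ra hne

def GSGood (R : Fin n → Finset (Fin n)) : Prop :=
  (∀ a, (R a).Nonempty) ∧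
  (∀ a b, b ∉ R a → ∃ a', gsProp ra R a' = b ∧ rb b a' < rb b a)

lemma gs_step (ha : ∀ a, Function.Injective (ra a)) (hb : ∀ b, Function.Injective (rb b))
    {R : Fin n → Finset (Fin n)} (hR : GSGood ra rb R)
    (hni : ¬ Function.Injective (gsProp ra R)) :
    ∃ R', GSGood ra rb R' ∧ ∑ a, ((R' a).card) + 1 = ∑ a, ((R a).card) := by
  obtain ⟨a1, a2, hne12, hpp, hlt⟩ : ∃ a1 a2, a1 ≠ a2 ∧ gsProp ra R a1 = gsProp ra R a2 ∧
      rb (gsProp ra R a1) a1 < rb (gsProp ra R a1) a2 := by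
    simp only [Function.Injective, not_forall] at hni
    obtain ⟨x, y, hxy, hne⟩ := hni
    rcases lt_or_gt_of_ne (fun h : rb (gsProp ra R x) x = rb (gsProp ra R x) y =>
        hne (hb _ h)) with h | h
    · exact ⟨x, y, hne, hxy, h⟩
    · exact ⟨y, x, fun h' => hne h'.symm, hxy.symm, by rw [← hxy]; exact h⟩
  obtain ⟨b, hbdef⟩ : ∃ b, gsProp ra R a1 = b := ⟨_, rfl⟩
  rw [hbdef] at hpp hlt
  -- a woman not currently proposed to
  have hnsurj : ¬ Function.Surjective (gsProp ra R) := fun hs =>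
    hni (Finite.injective_iff_surjective.mpr hs)
  obtain ⟨b0, hb0⟩ : ∃ b0, ∀ a, gsProp ra R a ≠ b0 := by
    simp only [Function.Surjective, not_forall] at hnsurj
    obtain ⟨b0, h⟩ := hnsurj
    exact ⟨b0, fun a he => h ⟨a, he⟩⟩
  have hb0mem : ∀ a, b0 ∈ R a := by
    intro a
    by_contra hmem
    obtain ⟨a', hp, _⟩ := hR.2 a b0 hmem
    exact hb0 a' hp
  have hb0b : b0 ≠ b := fun h => hb0 a1 (h ▸ hbdef)
  have hbmem : b ∈ R a2 := hpp ▸ gsProp_mem ra (hR.1 a2)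
  refine ⟨Function.update R a2 ((R a2).erase b), ?_, ?_⟩
  · constructor
    · intro a
      rcases eq_or_ne a a2 with rfl | h
      · rw [Function.update_self]
        exact ⟨b0, Finset.mem_erase.mpr ⟨hb0b, hb0mem a⟩⟩
      · rw [Function.update_of_ne h]; exact hR.1 a
    · intro a c hc
      have hpc : ∀ x, x ≠ a2 →
          gsProp ra (Function.update R a2 ((R a2).erase b)) x = gsProp ra R x := fun x h =>
        gsProp_congr ra ha (Function.update_of_ne h _ _) (hR.1 x)
      have hwit1 : gsProp ra (Function.update R a2 ((R a2).erase b)) a1 = b := by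
        rw [hpc a1 hne12]; exact hbdef
      rcases eq_or_ne a a2 with rfl | hanea2
      · rw [Function.update_self, Finset.mem_erase, not_and_or, not_not] at hc
        rcases hc with rfl | hc
        · exact ⟨a1, hwit1, hlt⟩
        · obtain ⟨a', hp, hr⟩ := hR.2 a c hc
          rcases eq_or_ne a' a with rfl | h
          · have hcb : c = b := by rw [← hp, hpp]
            subst hcb
            exact ⟨a1, hwit1, lt_trans hlt hr⟩
          · exact ⟨a', by rw [hpc a' h]; exact hp, hr⟩
      · rw [Function.update_of_ne hanea2] at hc
        obtain ⟨a', hp, hr⟩ := hR.2 a c hc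
        rcases eq_or_ne a' a2 with rfl | h
        · have hcb : c = b := by rw [← hp, hpp]
          subst hcb
          exact ⟨a1, hwit1, lt_trans hlt hr⟩
        · exact ⟨a', by rw [hpc a' h]; exact hp, hr⟩
  · have hfun : (fun a => (Function.update R a2 ((R a2).erase b) a).card)
        = Function.update (fun a => (R a).card) a2 ((R a2).erase b).card := by
      funext a
      rcases eq_or_ne a a2 with rfl | h
      · simp
      · simp [Function.update_of_ne h]
    rw [hfun, Finset.sum_update_of_mem (Finset.mem_univ a2), Finset.sdiff_singleton_eq_erase]
    have hRHS : (R a2).card + ∑ x ∈ Finset.univ.erase a2, (R x).card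
        = ∑ a, ((R a).card) := Finset.add_sum_erase Finset.univ (fun x => (R x).card) (Finset.mem_univ a2)
    have hce := Finset.card_erase_of_mem hbmem
    have hpos : 0 < (R a2).card := Finset.card_pos.mpr (hR.1 a2)
    omega

lemma gs_main (ha : ∀ a, Function.Injective (ra a)) (hb : ∀ b, Function.Injective (rb b)) :
    ∀ k (R : Fin n → Finset (Fin n)), GSGood ra rb R → ∑ a, ((R a).card) ≤ n + k →
    ∃ σ : Equiv.Perm (Fin n), ∀ a b, ra a b < ra a (σ a) → rb b (σ.symm b) < rb b a := by
  have extract : ∀ R : Fin n → Finset (Fin n), GSGood ra rb R →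
      Function.Injective (gsProp ra R) →
      ∃ σ : Equiv.Perm (Fin n), ∀ a b, ra a b < ra a (σ a) → rb b (σ.symm b) < rb b a := by
    intro R hR hinj
    refine ⟨Equiv.ofBijective _ (Finite.injective_iff_bijective.mp hinj), ?_⟩
    intro a b hab
    set σ := Equiv.ofBijective _ (Finite.injective_iff_bijective.mp hinj) with hσ
    have hσa : σ a = gsProp ra R a := rfl
    by_cases hbm : b ∈ R a
    · exact absurd hab (not_lt.mpr (hσa ▸ gsProp_min ra (hR.1 a) b hbm))
    · obtain ⟨a', hp, hr⟩ := hR.2 a b hbm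
      have hσb : σ a' = b := hp
      have hsymm : σ.symm b = a' := by rw [← hσb, Equiv.symm_apply_apply]
      rw [hsymm]; exact hr
  have lower : ∀ R : Fin n → Finset (Fin n), GSGood ra rb R → n ≤ ∑ a, ((R a).card) := by
    intro R hR
    calc n = ∑ _a : Fin n, 1 := by simp
    _ ≤ ∑ a, ((R a).card) :=
      Finset.sum_le_sum (fun a _ => Finset.card_pos.mpr (hR.1 a))
  intro k
  induction k with
  | zero =>
    intro R hR hsum
    by_cases hinj : Function.Injective (gsProp ra R)
    · exact extract R hR hinj
    · obtain ⟨R', hR', hcard⟩ := gs_step ra rb ha hb hR hinj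
      have := lower R' hR'
      omega
  | succ k ih =>
    intro R hR hsum
    by_cases hinj : Function.Injective (gsProp ra R)
    · exact extract R hR hinj
    · obtain ⟨R', hR', hcard⟩ := gs_step ra rb ha hb hR hinj
      exact ih R' hR' (by omega)

theorem gs_exists (ha : ∀ a, Function.Injective (ra a)) (hb : ∀ b, Function.Injective (rb b)) :
    ∃ σ : Equiv.Perm (Fin n), ∀ a b, ra a b < ra a (σ a) → rb b (σ.symm b) < rb b a := by
  apply gs_main ra rb ha hb (n * n) (fun _ => Finset.univ)
  · exact ⟨fun a => ⟨a, Finset.mem_univ a⟩, fun a b hb' => absurd (Finset.mem_univ b) hb'⟩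
  · simp only [Finset.card_univ, Fintype.card_fin]
    calc ∑ _a : Fin n, n = n * n := by simp [Finset.sum_const, mul_comm]
    _ ≤ n + n * n := Nat.le_add_left _ _

end GS
section Wrap

variable {B : Type*} [Fintype B]

/-- rank of `x` under strict order `p`: number of elements strictly better than `x`. -/
noncomputable def rnk (p : B → B → Prop) (x : B) : ℕ := {y | p y x}.ncard

lemma rnk_lt_iff {p : B → B → Prop} (hirr : ∀ x, ¬ p x x)
    (htr : ∀ {x y z}, p x y → p y z → p x z)
    (htot : ∀ x y, x ≠ y → p x y ∨ p y x) {x y : B} :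
    p x y ↔ rnk p x < rnk p y := by
  have fwd : ∀ {x y : B}, p x y → rnk p x < rnk p y := by
    intro x y hxy
    apply Set.ncard_lt_ncard _ (Set.toFinite _)
    constructor
    · intro z hz
      exact htr hz hxy
    · intro hsub
      exact hirr x (hsub hxy)
  constructor
  · exact fwd
  · intro hlt
    by_contra hnp
    rcases eq_or_ne x y with rfl | hne
    · exact lt_irrefl _ hlt
    · rcases htot x y hne with h | h
      · exact hnp h
      · exact absurd (fwd h) (by omega)

/-- Existence of a stable matching in a complete bipartite market with equal sides. -/
theorem exists_stable_pair {A B : Type*} [Fintype A] [Fintype B]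
    (hcard : Fintype.card A = Fintype.card B)
    (pa : A → B → B → Prop) (pb : B → A → A → Prop)
    (hairr : ∀ a x, ¬ pa a x x)
    (hatr : ∀ a {x y z}, pa a x y → pa a y z → pa a x z)
    (hatot : ∀ a x y, x ≠ y → pa a x y ∨ pa a y x)
    (hbirr : ∀ b x, ¬ pb b x x)
    (hbtr : ∀ b {x y z}, pb b x y → pb b y z → pb b x z)
    (hbtot : ∀ b x y, x ≠ y → pb b x y ∨ pb b y x) :
    ∃ σ : A ≃ B, ∀ a b, ¬ (pa a b (σ a) ∧ pb b a (σ.symm b)) := by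
  set n := Fintype.card A with hn
  let eA : A ≃ Fin n := Fintype.equivFinOfCardEq rfl
  let eB : B ≃ Fin n := Fintype.equivFinOfCardEq hcard.symm
  let ra : Fin n → Fin n → ℕ := fun i j => rnk (pa (eA.symm i)) (eB.symm j)
  let rb : Fin n → Fin n → ℕ := fun j i => rnk (pb (eB.symm j)) (eA.symm i)
  have hra : ∀ i, Function.Injective (ra i) := by
    intro i j j' h
    by_contra hne
    have hne' : eB.symm j ≠ eB.symm j' := fun h' => hne (eB.symm.injective h')
    rcases hatot (eA.symm i) _ _ hne' with hp | hp
    · exact absurd h (Nat.ne_of_lt ((rnk_lt_iff (hairr _) (hatr _) (hatot _)).mp hp))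
    · exact absurd h.symm (Nat.ne_of_lt ((rnk_lt_iff (hairr _) (hatr _) (hatot _)).mp hp))
  have hrb : ∀ j, Function.Injective (rb j) := by
    intro j i i' h
    by_contra hne
    have hne' : eA.symm i ≠ eA.symm i' := fun h' => hne (eA.symm.injective h')
    rcases hbtot (eB.symm j) _ _ hne' with hp | hp
    · exact absurd h (Nat.ne_of_lt ((rnk_lt_iff (hbirr _) (hbtr _) (hbtot _)).mp hp))
    · exact absurd h.symm (Nat.ne_of_lt ((rnk_lt_iff (hbirr _) (hbtr _) (hbtot _)).mp hp))
  obtain ⟨σ0, hσ0⟩ := gs_exists ra rb hra hrb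
  refine ⟨(eA.trans σ0).trans eB.symm, ?_⟩
  intro a b ⟨h1, h2⟩
  have hσa : ((eA.trans σ0).trans eB.symm) a = eB.symm (σ0 (eA a)) := rfl
  have hσs : ((eA.trans σ0).trans eB.symm).symm b = eA.symm (σ0.symm (eB b)) := rfl
  rw [hσa] at h1
  rw [hσs] at h2
  have h1' : pa (eA.symm (eA a)) (eB.symm (eB b)) (eB.symm (σ0 (eA a))) := by
    rw [Equiv.symm_apply_apply eA a, Equiv.symm_apply_apply eB b]; exact h1
  have hlt1 : ra (eA a) (eB b) < ra (eA a) (σ0 (eA a)) :=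
    (rnk_lt_iff (hairr _) (hatr _) (hatot _)).mp h1'
  have hlt2 := hσ0 (eA a) (eB b) hlt1
  have h3 : pb (eB.symm (eB b)) (eA.symm (σ0.symm (eB b))) (eA.symm (eA a)) :=
    (rnk_lt_iff (hbirr _) (hbtr _) (hbtot _)).mpr hlt2
  rw [Equiv.symm_apply_apply, Equiv.symm_apply_apply] at h3
  exact hbirr b a (hbtr b h2 h3)

end Wrap
/-! ## The partner function for the constructed perfect matching -/

open CAg in
/-- The partner function of the perfect stable matching: `q`, `d` are the numbers of
selectors and dummies, `Ecl` the clique edges, `Kc` the non-clique vertices, and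
`σe`, `σd` stable assignments for the two arbitrary-preference submarkets. -/
noncomputable def cliquePt {V : Type*} [DecidableEq V] (q d : ℕ)
    (Ecl : Finset (Sym2 V)) (Kc : Finset V)
    (σe : Fin q ≃ {e // e ∈ Ecl}) (σd : Fin d ≃ {v // v ∈ Kc}) : CAg V → CAg V
  | sel i => if h : i < q then me (σe ⟨i, h⟩).1 else sel i
  | me e => if h : e ∈ Ecl then sel (σe.symm ⟨e, h⟩).1 else we e
  | we e => if e ∈ Ecl then me' e else me e
  | me' e => we e
  | mv v => wv v
  | wv v => if h : v ∈ Kc then dum (σd.symm ⟨v, h⟩).1 else mv v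
  | dum i => if h : i < d then wv (σd ⟨i, h⟩).1 else dum i
  | mstar => wstar
  | wstar => mstar

theorem csm_addAg_clique_forward {V : Type*} [Fintype V] [DecidableEq V]
    (G : SimpleGraph V) (k : ℕ) (I : SR (CAg V)) (hI : IsCliqueInstance G k I)
    (K : Finset V) (hK : G.IsNClique k K) :
    ∀ W : Set (CAg V),
      W = {x | ∃ v ∈ K, x = CAg.mv v} ∪
          {x | ∃ e ∈ G.edgeSet, (∀ v ∈ e, v ∈ K) ∧ x = CAg.me' e} →
      W.ncard = k + k * (k - 1) / 2 ∧
      ∃ M : Finset (Sym2 (CAg V)),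
        (I.induce (cliqueOrig G k ∪ W)).IsStable M ∧
        (∀ x ∈ cliqueOrig G k ∪ W, ∃ y, s(x, y) ∈ M) ∧
        (∃ y, s(CAg.wstar, y) ∈ M) := by
  intro W hW
  subst hW
  classical
  obtain ⟨hACC, hMS, hSE, hEW, hEV, hEWS, hWE, hVMV, hVME, hVD⟩ := hI
  set q := k * (k - 1) / 2 with hqdef
  set d := Fintype.card V - k with hddef
  -- The clique edges and the non-clique vertices.
  set Ecl : Finset (Sym2 V) := K.offDiag.image Sym2.mk.uncurry with hEcldef
  have hEclmem : ∀ e : Sym2 V, e ∈ Ecl ↔ e ∈ G.edgeSet ∧ ∀ v ∈ e, v ∈ K := by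
    intro e
    induction e with
    | _ a b =>
      rw [hEcldef]
      simp only [Finset.mem_image, Finset.mem_offDiag]
      constructor
      · rintro ⟨⟨x, y⟩, ⟨hx, hy, hxy⟩, hxyE⟩
        rw [← hxyE]
        refine ⟨G.mem_edgeSet.mpr (hK.1 (Finset.mem_coe.mpr hx)
          (Finset.mem_coe.mpr hy) hxy), ?_⟩
        intro v hv
        rcases Sym2.mem_iff.mp hv with rfl | rfl
        · exact hx
        · exact hy
      · rintro ⟨hE, hall⟩
        refine ⟨(a, b), ⟨hall a (Sym2.mem_mk_left a b), hall b (Sym2.mem_mk_right a b), ?_⟩, rfl⟩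
        intro hab
        rw [show ((a, b).1 : V) = a from rfl, show ((a, b).2 : V) = b from rfl] at hab
        subst hab
        exact G.loopless.irrefl a (G.mem_edgeSet.mp hE)
  have hEclE : ∀ e ∈ Ecl, e ∈ G.edgeSet := fun e he => ((hEclmem e).mp he).1
  have hEclcard : Ecl.card = q := by
    rw [hEcldef, Sym2.card_image_offDiag, hK.2, Nat.choose_two_right, hqdef]
  set Kc : Finset V := Finset.univ \ K with hKcdef
  have hKcmem : ∀ v : V, v ∈ Kc ↔ v ∉ K := by intro v; rw [hKcdef]; simp
  have hKccard : Kc.card = d := by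
    rw [hKcdef, Finset.card_sdiff_of_subset (Finset.subset_univ K), Finset.card_univ, hK.2, hddef]
  -- Stable assignments in the two arbitrary-preference submarkets.
  have hcardE : Fintype.card (Fin q) = Fintype.card {e // e ∈ Ecl} := by
    rw [Fintype.card_fin, Fintype.card_coe, hEclcard]
  have hcardD : Fintype.card (Fin d) = Fintype.card {v // v ∈ Kc} := by
    rw [Fintype.card_fin, Fintype.card_coe, hKccard]
  have haccSE : ∀ i : ℕ, i < q → ∀ e ∈ G.edgeSet, I.accept (CAg.sel i) (CAg.me e) := by
    intro i hi e he
    rw [hACC]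
    exact Or.inl (Or.inr (Or.inl ⟨i, hi, rfl, e, he, rfl⟩))
  have haccDV : ∀ i : ℕ, i < d → ∀ v : V, I.accept (CAg.dum i) (CAg.wv v) := by
    intro i hi v
    rw [hACC]
    exact Or.inl (Or.inr (Or.inr (Or.inr (Or.inr (Or.inr ⟨i, hi, rfl, v, rfl⟩)))))
  obtain ⟨σe, hσe⟩ := exists_stable_pair hcardE
    (fun i x y => I.pref (CAg.sel i.1) (CAg.me x.1) (CAg.me y.1))
    (fun x i j => I.pref (CAg.me x.1) (CAg.sel i.1) (CAg.sel j.1))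
    (fun i x => I.pref_irrefl _ _)
    (fun i {x y z} hxy hyz => I.pref_trans hxy hyz)
    (fun i x y hne => I.pref_total (haccSE i.1 i.2 x.1 (hEclE x.1 x.2))
      (haccSE i.1 i.2 y.1 (hEclE y.1 y.2))
      (fun h => hne (Subtype.ext (by injection h))))
    (fun x i => I.pref_irrefl _ _)
    (fun x {i j l} hij hjk => I.pref_trans hij hjk)
    (fun x i j hne => I.pref_total (I.symm (haccSE i.1 i.2 x.1 (hEclE x.1 x.2)))
      (I.symm (haccSE j.1 j.2 x.1 (hEclE x.1 x.2)))
      (fun h => hne (Fin.val_injective (by injection h))))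
  obtain ⟨σd, hσd⟩ := exists_stable_pair hcardD
    (fun i x y => I.pref (CAg.dum i.1) (CAg.wv x.1) (CAg.wv y.1))
    (fun x i j => I.pref (CAg.wv x.1) (CAg.dum i.1) (CAg.dum j.1))
    (fun i x => I.pref_irrefl _ _)
    (fun i {x y z} hxy hyz => I.pref_trans hxy hyz)
    (fun i x y hne => I.pref_total (haccDV i.1 i.2 x.1) (haccDV i.1 i.2 y.1)
      (fun h => hne (Subtype.ext (by injection h))))
    (fun x i => I.pref_irrefl _ _)
    (fun x {i j l} hij hjk => I.pref_trans hij hjk)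
    (fun x i j hne => I.pref_total (I.symm (haccDV i.1 i.2 x.1)) (I.symm (haccDV j.1 j.2 x.1))
      (fun h => hne (Fin.val_injective (by injection h))))
  set pt := cliquePt q d Ecl Kc σe σd with hptdef
  -- The finset of all agents of the sub-instance.
  set Tfin : Finset (CAg V) :=
    (Finset.univ.image (CAg.wv : V → CAg V)) ∪ (G.edgeFinset.image CAg.we)
    ∪ ((Finset.range q).image CAg.sel) ∪ {CAg.wstar} ∪ (G.edgeFinset.image CAg.me)
    ∪ ((Finset.range d).image CAg.dum) ∪ {CAg.mstar}
    ∪ (K.image CAg.mv) ∪ (Ecl.image CAg.me') with hTdef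
  have hwvT : ∀ v : V, CAg.wv v ∈ Tfin := by intro v; rw [hTdef]; simp
  have hweT : ∀ e : Sym2 V, CAg.we e ∈ Tfin ↔ e ∈ G.edgeSet := by
    intro e; rw [hTdef]; simp [SimpleGraph.mem_edgeFinset]
  have hselT : ∀ i : ℕ, CAg.sel i ∈ Tfin ↔ i < q := by intro i; rw [hTdef]; simp
  have hwsT : CAg.wstar ∈ Tfin := by rw [hTdef]; simp
  have hmeT : ∀ e : Sym2 V, CAg.me e ∈ Tfin ↔ e ∈ G.edgeSet := by
    intro e; rw [hTdef]; simp [SimpleGraph.mem_edgeFinset]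
  have hdumT : ∀ i : ℕ, CAg.dum i ∈ Tfin ↔ i < d := by intro i; rw [hTdef]; simp
  have hmsT : CAg.mstar ∈ Tfin := by rw [hTdef]; simp
  have hmvT : ∀ v : V, CAg.mv v ∈ Tfin ↔ v ∈ K := by intro v; rw [hTdef]; simp
  have hme'T : ∀ e : Sym2 V, CAg.me' e ∈ Tfin ↔ e ∈ Ecl := by intro e; rw [hTdef]; simp
  -- pt equations
  have hpt_ms : pt CAg.mstar = CAg.wstar := by rw [hptdef]; simp [cliquePt]
  have hpt_ws : pt CAg.wstar = CAg.mstar := by rw [hptdef]; simp [cliquePt]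
  have hpt_mv : ∀ v, pt (CAg.mv v) = CAg.wv v := by intro v; rw [hptdef]; simp [cliquePt]
  have hpt_me' : ∀ e, pt (CAg.me' e) = CAg.we e := by intro e; rw [hptdef]; simp [cliquePt]
  have hpt_sel : ∀ i (hi : i < q), pt (CAg.sel i) = CAg.me (σe ⟨i, hi⟩).1 := by
    intro i hi; rw [hptdef]; simp [cliquePt, hi]
  have hpt_me_in : ∀ e (he : e ∈ Ecl), pt (CAg.me e) = CAg.sel (σe.symm ⟨e, he⟩).1 := by
    intro e he; rw [hptdef]; simp [cliquePt, he]
  have hpt_me_out : ∀ e, e ∉ Ecl → pt (CAg.me e) = CAg.we e := by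
    intro e he; rw [hptdef]; simp [cliquePt, he]
  have hpt_we_in : ∀ e, e ∈ Ecl → pt (CAg.we e) = CAg.me' e := by
    intro e he; rw [hptdef]; simp [cliquePt, he]
  have hpt_we_out : ∀ e, e ∉ Ecl → pt (CAg.we e) = CAg.me e := by
    intro e he; rw [hptdef]; simp [cliquePt, he]
  have hpt_wv_in : ∀ v (hv : v ∈ Kc), pt (CAg.wv v) = CAg.dum (σd.symm ⟨v, hv⟩).1 := by
    intro v hv; rw [hptdef]; simp [cliquePt, hv]
  have hpt_wv_out : ∀ v, v ∉ Kc → pt (CAg.wv v) = CAg.mv v := by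
    intro v hv; rw [hptdef]; simp [cliquePt, hv]
  have hpt_dum : ∀ i (hi : i < d), pt (CAg.dum i) = CAg.wv (σd ⟨i, hi⟩).1 := by
    intro i hi; rw [hptdef]; simp [cliquePt, hi]
  -- involution / closure of the partner map
  have hptT : ∀ x ∈ Tfin, (pt x ∈ Tfin ∧ pt (pt x) = x) := by
    intro x hx
    cases x with
    | wv v =>
      by_cases h : v ∈ Kc
      · have hlt : ((σd.symm ⟨v, h⟩ : Fin d) : ℕ) < d := (σd.symm ⟨v, h⟩).isLt
        rw [hpt_wv_in v h, hpt_dum _ hlt]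
        refine ⟨(hdumT _).mpr hlt, ?_⟩
        congr 1
        rw [Fin.eta, Equiv.apply_symm_apply]
      · have hvK : v ∈ K := by by_contra hc; exact h ((hKcmem v).mpr hc)
        rw [hpt_wv_out v h, hpt_mv v]
        exact ⟨(hmvT v).mpr hvK, rfl⟩
    | we e =>
      have he : e ∈ G.edgeSet := (hweT e).mp hx
      by_cases h : e ∈ Ecl
      · rw [hpt_we_in e h, hpt_me' e]
        exact ⟨(hme'T e).mpr h, rfl⟩
      · rw [hpt_we_out e h, hpt_me_out e h]
        exact ⟨(hmeT e).mpr he, rfl⟩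
    | sel i =>
      have hi : i < q := (hselT i).mp hx
      rw [hpt_sel i hi, hpt_me_in _ (σe ⟨i, hi⟩).2]
      refine ⟨(hmeT _).mpr (hEclE _ (σe ⟨i, hi⟩).2), ?_⟩
      congr 1
      rw [Subtype.coe_eta, Equiv.symm_apply_apply]
    | wstar => rw [hpt_ws, hpt_ms]; exact ⟨hmsT, rfl⟩
    | mv v =>
      have hvK : v ∈ K := (hmvT v).mp hx
      have hvKc : v ∉ Kc := fun hc => (hKcmem v).mp hc hvK
      rw [hpt_mv v, hpt_wv_out v hvKc]
      exact ⟨hwvT v, rfl⟩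
    | me e =>
      have he : e ∈ G.edgeSet := (hmeT e).mp hx
      by_cases h : e ∈ Ecl
      · have hlt : ((σe.symm ⟨e, h⟩ : Fin q) : ℕ) < q := (σe.symm ⟨e, h⟩).isLt
        rw [hpt_me_in e h, hpt_sel _ hlt]
        refine ⟨(hselT _).mpr hlt, ?_⟩
        congr 1
        rw [Fin.eta, Equiv.apply_symm_apply]
      · rw [hpt_me_out e h, hpt_we_out e h]
        exact ⟨(hweT e).mpr he, rfl⟩
    | me' e =>
      have h : e ∈ Ecl := (hme'T e).mp hx
      rw [hpt_me' e, hpt_we_in e h]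
      exact ⟨(hweT e).mpr (hEclE e h), rfl⟩
    | dum i =>
      have hi : i < d := (hdumT i).mp hx
      rw [hpt_dum i hi, hpt_wv_in _ (σd ⟨i, hi⟩).2]
      refine ⟨hwvT _, ?_⟩
      congr 1
      rw [Subtype.coe_eta, Equiv.symm_apply_apply]
    | mstar => rw [hpt_ms, hpt_ws]; exact ⟨hwsT, rfl⟩
  -- acceptability of every matched pair
  have hacc : ∀ x ∈ Tfin, I.accept x (pt x) := by
    intro x hx
    cases x with
    | wv v =>
      by_cases h : v ∈ Kc
      · rw [hpt_wv_in v h]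
        exact I.symm (haccDV _ (σd.symm ⟨v, h⟩).isLt v)
      · rw [hpt_wv_out v h, hACC]
        exact Or.inr (Or.inr (Or.inr (Or.inr (Or.inr (Or.inl ⟨v, rfl, rfl⟩)))))
    | we e =>
      have he := (hweT e).mp hx
      by_cases h : e ∈ Ecl
      · rw [hpt_we_in e h, hACC]
        exact Or.inr (Or.inr (Or.inr (Or.inr (Or.inl ⟨e, he, rfl, rfl⟩))))
      · rw [hpt_we_out e h, hACC]
        exact Or.inr (Or.inr (Or.inr (Or.inl ⟨e, he, rfl, Or.inl rfl⟩)))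
    | sel i =>
      have hi := (hselT i).mp hx
      rw [hpt_sel i hi]
      exact haccSE i hi _ (hEclE _ (σe ⟨i, hi⟩).2)
    | wstar =>
      rw [hpt_ws, hACC]
      exact Or.inr (Or.inl ⟨rfl, Or.inr rfl⟩)
    | mv v =>
      rw [hpt_mv v, hACC]
      exact Or.inl (Or.inr (Or.inr (Or.inr (Or.inr (Or.inl ⟨v, rfl, rfl⟩)))))
    | me e =>
      have he := (hmeT e).mp hx
      by_cases h : e ∈ Ecl
      · rw [hpt_me_in e h]
        exact I.symm (haccSE _ (σe.symm ⟨e, h⟩).isLt e he)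
      · rw [hpt_me_out e h, hACC]
        exact Or.inl (Or.inr (Or.inr (Or.inl ⟨e, he, rfl, Or.inl rfl⟩)))
    | me' e =>
      have h := (hme'T e).mp hx
      rw [hpt_me' e, hACC]
      exact Or.inl (Or.inr (Or.inr (Or.inr (Or.inl ⟨e, hEclE e h, rfl, rfl⟩))))
    | dum i =>
      have hi := (hdumT i).mp hx
      rw [hpt_dum i hi]
      exact haccDV i hi _
    | mstar =>
      rw [hpt_ms, hACC]
      exact Or.inl (Or.inl ⟨rfl, Or.inr rfl⟩)
  -- Tfin is the agent set of the sub-instance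
  have hTT : ∀ x : CAg V, x ∈ Tfin ↔ x ∈ cliqueOrig G k ∪
      ({x | ∃ v ∈ K, x = CAg.mv v} ∪ {x | ∃ e ∈ G.edgeSet, (∀ v ∈ e, v ∈ K) ∧ x = CAg.me' e}) := by
    intro x
    simp only [Set.mem_union, Set.mem_setOf_eq, cliqueOrig]
    constructor
    · intro hx
      cases x with
      | wv v => exact Or.inl (Or.inl ⟨v, rfl⟩)
      | we e => exact Or.inl (Or.inr (Or.inl ⟨e, (hweT e).mp hx, rfl⟩))
      | sel i => exact Or.inl (Or.inr (Or.inr (Or.inl ⟨i, (hselT i).mp hx, rfl⟩)))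
      | wstar => exact Or.inl (Or.inr (Or.inr (Or.inr (Or.inl rfl))))
      | me e => exact Or.inl (Or.inr (Or.inr (Or.inr (Or.inr (Or.inl ⟨e, (hmeT e).mp hx, rfl⟩)))))
      | dum i =>
        exact Or.inl (Or.inr (Or.inr (Or.inr (Or.inr (Or.inr (Or.inl ⟨i, (hdumT i).mp hx, rfl⟩))))))
      | mstar => exact Or.inl (Or.inr (Or.inr (Or.inr (Or.inr (Or.inr (Or.inr rfl))))))
      | mv v => exact Or.inr (Or.inl ⟨v, (hmvT v).mp hx, rfl⟩)
      | me' e =>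
        obtain ⟨he, hk⟩ := (hEclmem e).mp ((hme'T e).mp hx)
        exact Or.inr (Or.inr ⟨e, he, hk, rfl⟩)
    · intro hx
      rcases hx with hx | hx
      · rcases hx with ⟨v, rfl⟩ | ⟨e, he, rfl⟩ | ⟨i, hi, rfl⟩ | rfl | ⟨e, he, rfl⟩ | ⟨i, hi, rfl⟩ | rfl
        · exact hwvT v
        · exact (hweT e).mpr he
        · exact (hselT i).mpr hi
        · exact hwsT
        · exact (hmeT e).mpr he
        · exact (hdumT i).mpr hi
        · exact hmsT
      · rcases hx with ⟨v, hv, rfl⟩ | ⟨e, he, hk, rfl⟩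
        · exact (hmvT v).mpr hv
        · exact (hme'T e).mpr ((hEclmem e).mpr ⟨he, hk⟩)
  -- the matching
  set M : Finset (Sym2 (CAg V)) := Tfin.image (fun x => s(x, pt x)) with hMdef
  have hmemM : ∀ u v : CAg V, s(u, v) ∈ M ↔ u ∈ Tfin ∧ v = pt u := by
    intro u v
    rw [hMdef, Finset.mem_image]
    constructor
    · rintro ⟨x, hx, hxe⟩
      rcases Sym2.eq_iff.mp hxe with ⟨rfl, rfl⟩ | ⟨rfl, rfl⟩
      · exact ⟨hx, rfl⟩
      · exact ⟨(hptT x hx).1, ((hptT x hx).2).symm⟩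
    · rintro ⟨hu, rfl⟩
      exact ⟨u, hu, rfl⟩
  -- cardinality of W
  have hdisj : Disjoint (K.image CAg.mv) (Ecl.image CAg.me') := by
    rw [Finset.disjoint_left]
    intro x h1 h2
    simp only [Finset.mem_image] at h1 h2
    obtain ⟨a, -, rfl⟩ := h1
    obtain ⟨b, -, hb⟩ := h2
    exact absurd hb (by simp)
  have hWcard : ({x | ∃ v ∈ K, x = CAg.mv v} ∪
      {x | ∃ e ∈ G.edgeSet, (∀ v ∈ e, v ∈ K) ∧ x = CAg.me' e} : Set (CAg V)).ncard = k + q := by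
    have hWset : ({x | ∃ v ∈ K, x = CAg.mv v} ∪
        {x | ∃ e ∈ G.edgeSet, (∀ v ∈ e, v ∈ K) ∧ x = CAg.me' e} : Set (CAg V))
        = ↑(K.image CAg.mv ∪ Ecl.image CAg.me') := by
      ext x
      simp only [Set.mem_union, Set.mem_setOf_eq, Finset.coe_union, Set.mem_union,
        Finset.mem_coe, Finset.mem_image]
      constructor
      · rintro (⟨v, hv, rfl⟩ | ⟨e, he, hek, rfl⟩)
        · exact Or.inl ⟨v, hv, rfl⟩
        · exact Or.inr ⟨e, (hEclmem e).mpr ⟨he, hek⟩, rfl⟩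
      · rintro (⟨v, hv, rfl⟩ | ⟨e, he, rfl⟩)
        · exact Or.inl ⟨v, hv, rfl⟩
        · obtain ⟨he1, hek⟩ := (hEclmem e).mp he
          exact Or.inr ⟨e, he1, hek, rfl⟩
    rw [hWset, Set.ncard_coe_finset, Finset.card_union_of_disjoint hdisj,
      Finset.card_image_of_injective _ (fun a b h => by injection h),
      Finset.card_image_of_injective _ (fun a b h => by injection h), hK.2, hEclcard]
  -- no blocking pair
  have noblock : ∀ u v : CAg V, cliqueBaseAcc G q d u v → u ∈ Tfin → v ∈ Tfin →
      I.pref u v (pt u) → I.pref v u (pt v) → False := by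
    intro u v hbase hu hv h1 h2
    rcases hbase with ⟨rfl, hv7⟩ | ⟨i, hi, rfl, e, he, rfl⟩ | ⟨e, he, rfl, hv7⟩ |
      ⟨e, he, rfl, rfl⟩ | ⟨v0, rfl, rfl⟩ | ⟨i, hi, rfl, v0, rfl⟩
    · -- u = m*
      rcases hv7 with ⟨i, hi, rfl⟩ | rfl
      · rw [hpt_sel i hi] at h2
        exact I.pref_irrefl _ _ (I.pref_trans h2 (hSE i hi _ (hEclE _ (σe ⟨i, hi⟩).2)))
      · rw [hpt_ms] at h1
        exact I.pref_irrefl _ _ h1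
    · -- u = sel i, v = me e
      rw [hpt_sel i hi] at h1
      by_cases hm : e ∈ Ecl
      · rw [hpt_me_in e hm] at h2
        exact hσe ⟨i, hi⟩ ⟨e, hm⟩ ⟨h1, h2⟩
      · rw [hpt_me_out e hm] at h2
        exact I.pref_irrefl _ _ (I.pref_trans h2 (hEWS e he i hi))
    · -- u = me e
      rcases hv7 with rfl | ⟨v0, hv0, rfl⟩
      · by_cases hm : e ∈ Ecl
        · rw [hpt_we_in e hm] at h2
          exact I.pref_irrefl _ _ (I.pref_trans h2 (hWE e he))
        · rw [hpt_we_out e hm] at h2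
          exact I.pref_irrefl _ _ h2
      · by_cases hv0K : v0 ∈ Kc
        · have hm : e ∉ Ecl := fun hmm => ((hKcmem v0).mp hv0K) (((hEclmem e).mp hmm).2 v0 hv0)
          rw [hpt_me_out e hm] at h1
          exact I.pref_irrefl _ _ (I.pref_trans h1 (hEW e he v0 hv0))
        · rw [hpt_wv_out v0 hv0K] at h2
          exact I.pref_irrefl _ _ (I.pref_trans h2 (hVMV v0 e he hv0))
    · -- u = me' e
      have hm : e ∈ Ecl := (hme'T e).mp hu
      rw [hpt_we_in e hm] at h2
      exact I.pref_irrefl _ _ h2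
    · -- u = mv v0
      have hvK : v0 ∈ K := (hmvT v0).mp hu
      have hv0K : v0 ∉ Kc := fun hc => (hKcmem v0).mp hc hvK
      rw [hpt_wv_out v0 hv0K] at h2
      exact I.pref_irrefl _ _ h2
    · -- u = dum i
      by_cases hv0K : v0 ∈ Kc
      · rw [hpt_dum i hi] at h1
        rw [hpt_wv_in v0 hv0K] at h2
        exact hσd ⟨i, hi⟩ ⟨v0, hv0K⟩ ⟨h1, h2⟩
      · rw [hpt_wv_out v0 hv0K] at h2
        exact I.pref_irrefl _ _ (I.pref_trans h2 (hVD v0 i hi))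
  -- assembly
  refine ⟨hWcard, M, ⟨⟨?_, ?_⟩, ?_⟩, ?_, ?_⟩
  · intro u v huv
    obtain ⟨hu, rfl⟩ := (hmemM u v).mp huv
    exact ⟨hacc u hu, (hTT u).mp hu, (hTT _).mp (hptT u hu).1⟩
  · intro u v w h1 h2
    obtain ⟨hu, rfl⟩ := (hmemM u v).mp h1
    obtain ⟨-, h⟩ := (hmemM u w).mp h2
    exact h.symm
  · rintro u v ⟨⟨haccuv, huT, hvT⟩, hbu, hbv⟩
    have hu : u ∈ Tfin := (hTT u).mpr huT
    have hv : v ∈ Tfin := (hTT v).mpr hvT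
    have h1 : I.pref u v (pt u) := (hbu (pt u) ((hmemM u (pt u)).mpr ⟨hu, rfl⟩)).1
    have h2 : I.pref v u (pt v) := (hbv (pt v) ((hmemM v (pt v)).mpr ⟨hv, rfl⟩)).1
    rcases (hACC u v).mp haccuv with hb | hb
    · exact noblock u v hb hu hv h1 h2
    · exact noblock v u hb hv hu h2 h1
  · intro x hxT
    exact ⟨pt x, (hmemM x (pt x)).mpr ⟨(hTT x).mpr hxT, rfl⟩⟩
  · exact ⟨pt CAg.wstar, (hmemM _ _).mpr ⟨hwsT, rfl⟩⟩
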